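/- arXiv:2105.14623 — 5 statements merged into one kernel-verified Lean document; each statement's English description precedes it below -/
import Mathlib

section
/- Let G and G' be groups, and let A be a group equipped with an action of G × G' by group automorphisms that factors through the projection to G (i.e. (σ,τ)(a) = σ(a) for all σ ∈ G, τ ∈ G', a ∈ A). Suppose ζ : G → A is a cocycle for the induced G-action and γ : G' → A is a group homomorphism such that σ(γ(τ)) = ζ(σ)⁻¹ · γ(τ) · ζ(σ) for all σ ∈ G and τ ∈ G'. Then the map φ : G × G' → A defined by φ((σ,τ)) = ζ(σ) · σ(γ(τ)) is a cocycle. -/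
/-- Converse construction: from a cocycle `ζ : G → A` for the induced
`G`-action and a homomorphism `γ : G' →* A` whose image satisfies
`σ (γ τ) = (ζ σ)⁻¹ * γ τ * ζ σ`, the map `φ (σ, τ) = ζ σ * σ (γ τ)` is a cocycle on `G × G'`. -/
theorem stmt1 (G G' A : Type*) [Group G] [Group G'] [Group A]
    [MulDistribMulAction (G × G') A]
    (hfac : ∀ (σ : G) (τ : G') (a : A), (σ, τ) • a = ((σ, (1 : G')) : G × G') • a)
    (ζ : G → A)
    (hζ : ∀ σ₁ σ₂ : G, ζ (σ₁ * σ₂) = ζ σ₁ * ((σ₁, (1 : G')) : G × G') • ζ σ₂)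
    (γ : G' →* A)
    (hcomm : ∀ (σ : G) (τ : G'),
      ((σ, (1 : G')) : G × G') • γ τ = (ζ σ)⁻¹ * γ τ * ζ σ)
    (φ : G × G' → A)
    (hφ : ∀ (σ : G) (τ : G'), φ (σ, τ) = ζ σ * ((σ, (1 : G')) : G × G') • γ τ) :
    ∀ g h : G × G', φ (g * h) = φ g * g • φ h := by
  rintro ⟨σ₁, τ₁⟩ ⟨σ₂, τ₂⟩
  have hs : ∀ (a b : G) (x : A),
      ((a * b, (1 : G')) : G × G') • x
        = ((a, (1 : G')) : G × G') • (((b, (1 : G')) : G × G') • x) := by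
    intro a b x
    rw [← mul_smul, Prod.mk_mul_mk, mul_one]
  show φ (σ₁ * σ₂, τ₁ * τ₂) = _
  rw [hφ, hφ, hφ, hζ, map_mul, hfac σ₁ τ₁, hs σ₁ σ₂, smul_mul', hcomm σ₂ τ₁,
    smul_mul', smul_mul', smul_mul', smul_mul', smul_inv']
  group
end

section
/- Let α be a nonzero rational number. There is a unique ℚ-algebra automorphism σ of the field ℚ(t) of rational functions in one variable over ℚ satisfying σ(t) = α/t, and the fixed field {f ∈ ℚ(t) : σ(f) = f} is exactly the subfield ℚ(t + α/t) generated over ℚ by t + α/t. -/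
open Polynomial IntermediateField

noncomputable section Stmt4Aux

private lemma stmt4_X_trans : Transcendental ℚ (RatFunc.X : RatFunc ℚ) := by
  rw [← RatFunc.algebraMap_X (K := ℚ)]
  exact (transcendental_algebraMap_iff (RatFunc.algebraMap_injective ℚ)).2
    (Polynomial.transcendental_X ℚ)

private lemma stmt4_C_ne_zero {α : ℚ} (hα : α ≠ 0) : (RatFunc.C α : RatFunc ℚ) ≠ 0 := by
  rw [show (RatFunc.C α : RatFunc ℚ) = algebraMap ℚ (RatFunc ℚ) α by
    rw [eq_ratCast (algebraMap ℚ (RatFunc ℚ)), eq_ratCast RatFunc.C]]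
  exact (_root_.map_ne_zero _).mpr hα

private lemma stmt4_Y_trans {α : ℚ} (hα : α ≠ 0) :
    Transcendental ℚ (RatFunc.C α / RatFunc.X : RatFunc ℚ) := by
  intro h
  apply stmt4_X_trans
  have hC : (RatFunc.C α : RatFunc ℚ) ≠ 0 := stmt4_C_ne_zero hα
  have hX : (RatFunc.X : RatFunc ℚ) ≠ 0 := RatFunc.X_ne_zero
  have h1 : IsAlgebraic ℚ ((RatFunc.C α / RatFunc.X : RatFunc ℚ))⁻¹ := h.inv
  have h2 : IsAlgebraic ℚ (RatFunc.C α : RatFunc ℚ) := by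
    rw [show (RatFunc.C α : RatFunc ℚ) = algebraMap ℚ (RatFunc ℚ) α by
      rw [eq_ratCast (algebraMap ℚ (RatFunc ℚ)), eq_ratCast RatFunc.C]]
    exact isAlgebraic_algebraMap α
  have hmul := (isAlgebraic_iff_isIntegral.mp h2).mul (isAlgebraic_iff_isIntegral.mp h1)
  refine isAlgebraic_iff_isIntegral.mpr ?_
  convert hmul using 1
  · rfl
  · rw [inv_div, mul_comm, div_mul_cancel₀ _ hC]

private lemma stmt4_hom_ext {f g : RatFunc ℚ →ₐ[ℚ] RatFunc ℚ}
    (h : f RatFunc.X = g RatFunc.X) : f = g := by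
  have key : ∀ p : Polynomial ℚ, f (algebraMap (Polynomial ℚ) (RatFunc ℚ) p)
      = g (algebraMap (Polynomial ℚ) (RatFunc ℚ) p) := by
    intro p
    induction p using Polynomial.induction_on' with
    | add p q hp hq => simp only [map_add, hp, hq]
    | monomial n a =>
      rw [← Polynomial.C_mul_X_pow_eq_monomial, map_mul, map_pow, RatFunc.algebraMap_C,
        RatFunc.algebraMap_X, map_mul, map_mul, map_pow, map_pow, h]
      congr 1
      rw [show (RatFunc.C a : RatFunc ℚ) = algebraMap ℚ (RatFunc ℚ) a by
        rw [eq_ratCast (algebraMap ℚ (RatFunc ℚ)), eq_ratCast RatFunc.C], f.commutes, g.commutes]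
  apply AlgHom.ext
  intro x
  induction x using RatFunc.induction_on with
  | f p q hq => rw [map_div₀, map_div₀, key, key]

private lemma stmt4_aMap (p : Polynomial ℚ) :
    algebraMap (Polynomial ℚ) (RatFunc ℚ) p = Polynomial.aeval (RatFunc.X : RatFunc ℚ) p := by
  induction p using Polynomial.induction_on' with
  | add p q hp hq => rw [map_add, map_add, hp, hq]
  | monomial n a =>
    rw [← Polynomial.C_mul_X_pow_eq_monomial, map_mul, map_pow, RatFunc.algebraMap_C,
      RatFunc.algebraMap_X, map_mul, map_pow, Polynomial.aeval_X, Polynomial.aeval_C,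
      eq_ratCast (algebraMap ℚ (RatFunc ℚ)), eq_ratCast RatFunc.C]

private lemma stmt4_adjoinX :
    IntermediateField.adjoin ℚ {(RatFunc.X : RatFunc ℚ)} = ⊤ := by
  rw [eq_top_iff]
  have key : ∀ p : Polynomial ℚ,
      algebraMap (Polynomial ℚ) (RatFunc ℚ) p ∈
        IntermediateField.adjoin ℚ {(RatFunc.X : RatFunc ℚ)} := by
    intro p
    rw [stmt4_aMap]
    exact IntermediateField.algebra_adjoin_le_adjoin ℚ _
      (Polynomial.aeval_mem_adjoin_singleton ℚ _)
  intro f _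
  induction f using RatFunc.induction_on with
  | f p q hq => exact div_mem (key p) (key q)

private lemma stmt4_ne {α : ℚ} : (RatFunc.C α / RatFunc.X : RatFunc ℚ) ≠ RatFunc.X := by
  intro h
  rw [div_eq_iff (RatFunc.X_ne_zero : (RatFunc.X : RatFunc ℚ) ≠ 0)] at h
  have h2 : algebraMap (Polynomial ℚ) (RatFunc ℚ) (Polynomial.C α)
      = algebraMap (Polynomial ℚ) (RatFunc ℚ) (Polynomial.X * Polynomial.X) := by
    rw [RatFunc.algebraMap_C, map_mul, RatFunc.algebraMap_X]; exact h
  have h3 := RatFunc.algebraMap_injective ℚ h2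
  have := congrArg Polynomial.natDegree h3
  simp [Polynomial.natDegree_C, Polynomial.natDegree_X] at this

private def stmt4_fixedF (σ : RatFunc ℚ ≃ₐ[ℚ] RatFunc ℚ) : IntermediateField ℚ (RatFunc ℚ) where
  carrier := {f | σ f = f}
  mul_mem' := by
    intro a b ha hb
    simp only [Set.mem_setOf_eq, map_mul] at *
    rw [ha, hb]
  one_mem' := map_one σ
  add_mem' := by
    intro a b ha hb
    simp only [Set.mem_setOf_eq, map_add] at *
    rw [ha, hb]
  zero_mem' := map_zero σ
  algebraMap_mem' := fun r => σ.commutes r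
  inv_mem' := by
    intro x hx
    simp only [Set.mem_setOf_eq, map_inv₀] at *
    rw [hx]

set_option maxHeartbeats 1000000 in
set_option synthInstance.maxHeartbeats 400000 in
private lemma stmt4_fixed (α : ℚ) (hα : α ≠ 0) (σ : RatFunc ℚ ≃ₐ[ℚ] RatFunc ℚ)
    (hσ : σ RatFunc.X = RatFunc.C α / RatFunc.X) :
    {f : RatFunc ℚ | σ f = f} =
      (IntermediateField.adjoin ℚ
          {(RatFunc.X : RatFunc ℚ) + RatFunc.C α / RatFunc.X} : Set (RatFunc ℚ)) := by
  have hX0 : (RatFunc.X : RatFunc ℚ) ≠ 0 := RatFunc.X_ne_zero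
  have hC0 : (RatFunc.C α : RatFunc ℚ) ≠ 0 := stmt4_C_ne_zero hα
  set π : RatFunc ℚ := RatFunc.X + RatFunc.C α / RatFunc.X with hπ
  have hσC : σ (RatFunc.C α) = RatFunc.C α := by
    rw [show (RatFunc.C α : RatFunc ℚ) = algebraMap ℚ (RatFunc ℚ) α by
      rw [eq_ratCast (algebraMap ℚ (RatFunc ℚ)), eq_ratCast RatFunc.C]]
    exact σ.commutes α
  have hσY : σ (RatFunc.C α / RatFunc.X) = RatFunc.X := by
    rw [map_div₀, hσC, hσ, div_div_eq_mul_div, mul_comm, mul_div_assoc, div_self hC0, mul_one]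
  have hσπ : σ π = π := by rw [hπ, map_add, hσ, hσY, add_comm]
  set K : IntermediateField ℚ (RatFunc ℚ) := IntermediateField.adjoin ℚ {π} with hK
  set F : IntermediateField ℚ (RatFunc ℚ) := stmt4_fixedF σ with hF
  have hKF : K ≤ F := by
    rw [hK]
    refine IntermediateField.adjoin_le_iff.mpr ?_
    intro x hx
    rw [Set.mem_singleton_iff] at hx
    subst hx
    exact hσπ
  have hπK : π ∈ K := IntermediateField.subset_adjoin ℚ _ rfl
  have hcK : (RatFunc.C α : RatFunc ℚ) ∈ K := by
    rw [show (RatFunc.C α : RatFunc ℚ) = algebraMap ℚ (RatFunc ℚ) α by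
      rw [eq_ratCast (algebraMap ℚ (RatFunc ℚ)), eq_ratCast RatFunc.C]]
    exact IntermediateField.algebraMap_mem _ α
  set p : Polynomial K :=
    Polynomial.X ^ 2 + (Polynomial.C (-(⟨π, hπK⟩ : K)) * Polynomial.X
      + Polynomial.C (⟨RatFunc.C α, hcK⟩ : K)) with hp
  have hpm : p.Monic := by
    apply Polynomial.monic_X_pow_add
    calc Polynomial.degree (Polynomial.C (-(⟨π, hπK⟩ : K)) * Polynomial.X
          + Polynomial.C (⟨RatFunc.C α, hcK⟩ : K)) ≤ 1 := Polynomial.degree_linear_le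
      _ < 2 := by norm_num
  have hpeval : Polynomial.aeval (RatFunc.X : RatFunc ℚ) p = 0 := by
    rw [hp]
    simp only [map_add, map_mul, map_pow, Polynomial.aeval_X, Polynomial.aeval_C, map_neg]
    rw [show (algebraMap K (RatFunc ℚ)) (⟨π, hπK⟩ : K) = π from rfl,
      show (algebraMap K (RatFunc ℚ)) (⟨RatFunc.C α, hcK⟩ : K) = RatFunc.C α from rfl]
    rw [hπ]
    field_simp
    ring
  have hint : IsIntegral K (RatFunc.X : RatFunc ℚ) := ⟨p, hpm, hpeval⟩
  have hadjK : IntermediateField.adjoin K {(RatFunc.X : RatFunc ℚ)} = ⊤ :=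
    IntermediateField.adjoin_eq_top_of_adjoin_eq_top ℚ stmt4_adjoinX
  have htop : K⟮(RatFunc.X : RatFunc ℚ)⟯ = ⊤ := hadjK
  have hfd : FiniteDimensional K (RatFunc ℚ) := by
    have h := IntermediateField.adjoin.finiteDimensional hint
    rw [htop] at h
    exact (IntermediateField.topEquiv (F := K) (E := RatFunc ℚ)).toLinearEquiv.finiteDimensional
  have hrank : Module.finrank K (RatFunc ℚ) ≤ 2 := by
    have h1 := IntermediateField.adjoin.finrank hint
    rw [htop, IntermediateField.finrank_top'] at h1
    rw [h1]
    have h2 := minpoly.min (A := K) (x := (RatFunc.X : RatFunc ℚ)) hpm hpeval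
    have h3 : p.degree ≤ 2 := by
      rw [hp]
      refine le_trans (Polynomial.degree_add_le _ _) ?_
      simp only [Polynomial.degree_X_pow]
      exact max_le le_rfl (le_trans Polynomial.degree_linear_le (by norm_num))
    exact Polynomial.natDegree_le_iff_degree_le.mpr (le_trans h2 h3)
  set F' : IntermediateField K (RatFunc ℚ) := IntermediateField.extendScalars hKF with hF'
  haveI : FiniteDimensional F' (RatFunc ℚ) := FiniteDimensional.right K F' (RatFunc ℚ)
  haveI : FiniteDimensional K F' := FiniteDimensional.left K F' (RatFunc ℚ)
  have hmul : Module.finrank K F' * Module.finrank F' (RatFunc ℚ)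
      = Module.finrank K (RatFunc ℚ) := Module.finrank_mul_finrank _ _ _
  have hn1 : Module.finrank F' (RatFunc ℚ) ≠ 1 := by
    intro h1
    obtain ⟨c, hc⟩ := (finrank_eq_one_iff_of_nonzero' (1 : RatFunc ℚ) one_ne_zero).mp h1 RatFunc.X
    have hXF : (RatFunc.X : RatFunc ℚ) ∈ F' := by
      rw [← hc]
      have h2 : (c : RatFunc ℚ) * 1 ∈ F' := mul_mem c.2 (one_mem _)
      simpa [Algebra.smul_def] using h2
    have hXfix : σ RatFunc.X = RatFunc.X := hXF
    rw [hσ] at hXfix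
    exact stmt4_ne hXfix
  have hn0 : Module.finrank F' (RatFunc ℚ) ≠ 0 := Module.finrank_pos.ne'
  have hn2 : 2 ≤ Module.finrank F' (RatFunc ℚ) := by omega
  have hm0 : Module.finrank K F' ≠ 0 := Module.finrank_pos.ne'
  have hm1 : Module.finrank K F' = 1 := by
    have h4 : Module.finrank K F' * 2 ≤ Module.finrank K F' * Module.finrank F' (RatFunc ℚ) :=
      Nat.mul_le_mul_left _ hn2
    omega
  have hFbot : F' = ⊥ := IntermediateField.finrank_eq_one_iff.mp hm1
  have hFK : F ≤ K := by
    intro x hx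
    have hx' : x ∈ F' := hx
    rw [hFbot, IntermediateField.mem_bot] at hx'
    obtain ⟨y, rfl⟩ := hx'
    exact y.2
  ext f
  constructor
  · intro hf
    exact hFK hf
  · intro hf
    exact hKF hf

end Stmt4Aux

/-- For a nonzero rational `α`, there is a unique `ℚ`-algebra
automorphism `σ` of `ℚ(t)` with `σ t = α / t`, and its fixed field is exactly
`ℚ(t + α/t)`. -/
theorem stmt4 (α : ℚ) (hα : α ≠ 0) :
    (∃! σ : RatFunc ℚ ≃ₐ[ℚ] RatFunc ℚ, σ RatFunc.X = RatFunc.C α / RatFunc.X) ∧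
    (∀ σ : RatFunc ℚ ≃ₐ[ℚ] RatFunc ℚ, σ RatFunc.X = RatFunc.C α / RatFunc.X →
      {f : RatFunc ℚ | σ f = f} =
        (IntermediateField.adjoin ℚ
            {(RatFunc.X : RatFunc ℚ) + RatFunc.C α / RatFunc.X} :
          Set (RatFunc ℚ))) := by
  classical
  have hX0 : (RatFunc.X : RatFunc ℚ) ≠ 0 := RatFunc.X_ne_zero
  have hC0 : (RatFunc.C α : RatFunc ℚ) ≠ 0 := stmt4_C_ne_zero hα
  set Y : RatFunc ℚ := RatFunc.C α / RatFunc.X with hY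
  have hYtr : Transcendental ℚ Y := stmt4_Y_trans hα
  have hinj : Function.Injective (Polynomial.aeval Y : Polynomial ℚ →ₐ[ℚ] RatFunc ℚ) :=
    (transcendental_iff_injective).mp hYtr
  set σ₀ : RatFunc ℚ →ₐ[ℚ] RatFunc ℚ :=
    (RatFunc.liftRingHom (Polynomial.aeval Y).toRingHom
      (nonZeroDivisors_le_comap_nonZeroDivisors_of_injective _ hinj)).toRatAlgHom with hσ₀
  have hσ₀p : ∀ q : Polynomial ℚ, σ₀ (algebraMap (Polynomial ℚ) (RatFunc ℚ) q)
      = Polynomial.aeval Y q := by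
    intro q
    have h := RatFunc.liftRingHom_apply_div' (Polynomial.aeval Y).toRingHom
      (nonZeroDivisors_le_comap_nonZeroDivisors_of_injective _ hinj) q 1
    rw [hσ₀]
    simpa using h
  have hσ₀X : σ₀ RatFunc.X = Y := by
    rw [← RatFunc.algebraMap_X (K := ℚ), hσ₀p]
    simp
  have hσ₀C : σ₀ (RatFunc.C α) = RatFunc.C α := by
    rw [show (RatFunc.C α : RatFunc ℚ) = algebraMap ℚ (RatFunc ℚ) α by
      rw [eq_ratCast (algebraMap ℚ (RatFunc ℚ)), eq_ratCast RatFunc.C]]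
    exact σ₀.commutes α
  have hidh : σ₀.comp σ₀ = AlgHom.id ℚ (RatFunc ℚ) := by
    apply stmt4_hom_ext
    rw [AlgHom.comp_apply, hσ₀X, AlgHom.id_apply, hY, map_div₀, hσ₀C, hσ₀X, hY,
      div_div_eq_mul_div, mul_comm, mul_div_assoc, div_self hC0, mul_one]
  set σ : RatFunc ℚ ≃ₐ[ℚ] RatFunc ℚ := AlgEquiv.ofAlgHom σ₀ σ₀ hidh hidh with hσdef
  have hσX : σ RatFunc.X = RatFunc.C α / RatFunc.X := hσ₀X
  constructor
  · refine ⟨σ, hσX, ?_⟩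
    intro τ hτ
    have h : (τ : RatFunc ℚ →ₐ[ℚ] RatFunc ℚ) = (σ : RatFunc ℚ →ₐ[ℚ] RatFunc ℚ) :=
      stmt4_hom_ext (by
        rw [show ((τ : RatFunc ℚ →ₐ[ℚ] RatFunc ℚ)) RatFunc.X = τ RatFunc.X from rfl,
          show ((σ : RatFunc ℚ →ₐ[ℚ] RatFunc ℚ)) RatFunc.X = σ RatFunc.X from rfl, hτ, hσX])
    exact AlgEquiv.ext fun x => AlgHom.congr_fun h x
  · intro τ hτ
    exact stmt4_fixed α hα τ hτ
end

section
/- (Hilbert 90 for GL_n.) Let K be a finite Galois extension of ℚ with Galois group G = Gal(K/ℚ), acting entrywise on matrices over K. If ψ : G → GL_n(K) satisfies the cocycle condition ψ(στ) = ψ(σ) · σ(ψ(τ)) for all σ, τ ∈ G, then there exists a matrix A ∈ GL_n(K) such that ψ(σ) = A⁻¹ · σ(A) for every σ ∈ G. -/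
open Matrix


/-- **Hilbert 90 for `GLₙ`.** If `K/ℚ` is a finite Galois extension and
`ψ : Gal(K/ℚ) → GLₙ(K)` satisfies the cocycle condition `ψ(στ) = ψ(σ) σ(ψ(τ))`, then
there is `A ∈ GLₙ(K)` with `ψ(σ) = A⁻¹ σ(A)` for every `σ`. -/
theorem stmt12 (K : Type*) [Field K] [Algebra ℚ K] [FiniteDimensional ℚ K]
    [IsGalois ℚ K] (n : ℕ)
    (ψ : (K ≃ₐ[ℚ] K) → Matrix.GeneralLinearGroup (Fin n) K)
    (hψ : ∀ σ τ : K ≃ₐ[ℚ] K, (ψ (σ * τ)).val = (ψ σ).val * ((ψ τ).val.map ⇑σ)) :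
    ∃ A : Matrix.GeneralLinearGroup (Fin n) K,
      ∀ σ : K ≃ₐ[ℚ] K, (ψ σ).val = (A⁻¹).val * (A.val.map ⇑σ) := by
  classical
  -- the semilinear "averaging" map
  let Q : (Fin n → K) → (Fin n → K) :=
    fun v => ∑ σ : K ≃ₐ[ℚ] K, Matrix.mulVec (ψ σ).val (fun i => σ (v i))
  -- Dedekind independence of characters
  have li : LinearIndependent K (fun σ : K ≃ₐ[ℚ] K => (σ : K → K)) := by
    have h := LinearIndependent.comp (linearIndependent_monoidHom K K)
      (fun σ : K ≃ₐ[ℚ] K => (σ : K →* K))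
      (fun x y h => by ext a; exact DFunLike.ext_iff.1 h a)
    exact h
  -- the range of Q spans everything
  have hspan : Submodule.span K (Set.range Q) = ⊤ := by
    by_contra hne
    obtain ⟨f, hf0, hf⟩ := Submodule.exists_dual_map_eq_bot_of_lt_top
      (lt_top_iff_ne_top.2 hne) inferInstance
    have hfQ : ∀ v, f (Q v) = 0 := by
      intro v
      have hmem : f (Q v) ∈ (Submodule.span K (Set.range Q)).map f :=
        Submodule.mem_map_of_mem (Submodule.subset_span ⟨v, rfl⟩)
      rw [hf] at hmem; exact (Submodule.mem_bot K).1 hmem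
    have key : ∀ (j : Fin n) (σ : K ≃ₐ[ℚ] K), f (fun i => (ψ σ).val i j) = 0 := by
      intro j
      have h2 : ∀ c : K,
          ∑ σ : K ≃ₐ[ℚ] K, f (fun i => (ψ σ).val i j) * σ c = 0 := by
        intro c
        have h3 := hfQ (Pi.single j c : Fin n → K)
        have h4 : Q (Pi.single j c : Fin n → K)
            = ∑ σ : K ≃ₐ[ℚ] K, σ c • (fun i => (ψ σ).val i j) := by
          refine Finset.sum_congr rfl fun σ _ => ?_
          have : (fun i => σ ((Pi.single j c : Fin n → K) i))
              = (Pi.single j (σ c) : Fin n → K) := by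
            funext i
            by_cases h : i = j
            · subst h; simp
            · simp [Pi.single_eq_of_ne h]
          rw [this, Matrix.mulVec_single]
          funext i; simp [mul_comm]
        rw [h4, map_sum] at h3
        simpa [mul_comm] using h3
      have h5 : ∑ σ : K ≃ₐ[ℚ] K,
          (f (fun i => (ψ σ).val i j)) • ((σ : K → K)) = 0 := by
        funext c
        simpa [Finset.sum_apply, smul_eq_mul] using h2 c
      exact fun σ => (Fintype.linearIndependent_iff.1 li) _ h5 σ
    -- conclude f = 0, contradiction
    apply hf0
    refine LinearMap.ext fun w => ?_
    rw [LinearMap.zero_apply]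
    have hw : w = (ψ 1).val *ᵥ (((ψ 1)⁻¹).val *ᵥ w) := by
      rw [Matrix.mulVec_mulVec, ← Units.val_mul, mul_inv_cancel]
      simp
    set v := ((ψ 1)⁻¹).val *ᵥ w with hv
    have hsum : (ψ 1).val *ᵥ v = ∑ j, v j • (fun i => (ψ 1).val i j) := by
      funext i
      simp [Matrix.mulVec, dotProduct, Finset.sum_apply, mul_comm]
    rw [hw, hsum, map_sum]
    simp [key]
  -- extract a basis from the range of Q
  obtain ⟨s, hs_sub, hs_span, hs_li⟩ := exists_linearIndependent K (Set.range Q)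
  rw [hspan] at hs_span
  haveI : Fintype s := (hs_li.setFinite).fintype
  let b0 : Module.Basis s K (Fin n → K) :=
    Module.Basis.mk hs_li (by rw [Subtype.range_coe, hs_span])
  have hcard : Fintype.card s = n := by
    have h1 := Module.finrank_eq_card_basis b0
    rw [Module.finrank_fin_fun] at h1
    omega
  let e : s ≃ Fin n := Fintype.equivFinOfCardEq hcard
  choose m hm using fun j : Fin n => hs_sub (e.symm j).2
  let b : Module.Basis (Fin n) K (Fin n → K) := b0.reindex e
  have hb : ∀ j, b j = Q (m j) := by
    intro j
    rw [hm j]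
    simp [b, b0, Module.Basis.mk_apply]
  -- the matrix B
  let M0 : Matrix (Fin n) (Fin n) K := Matrix.of fun i j => m j i
  let B : Matrix (Fin n) (Fin n) K := ∑ σ : K ≃ₐ[ℚ] K, (ψ σ).val * M0.map ⇑σ
  have hBcol : ∀ i j, B i j = Q (m j) i := by
    intro i j
    simp [B, Q, Matrix.mul_apply, Matrix.mulVec, dotProduct,
      Finset.sum_apply, Matrix.sum_apply, M0]
  have hB : B = (Pi.basisFun K (Fin n)).toMatrix ⇑b := by
    ext i j
    rw [Module.Basis.toMatrix_apply, Pi.basisFun_repr, hb, hBcol]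
  haveI hInv : Invertible B :=
    ((Pi.basisFun K (Fin n)).invertibleToMatrix b).copy B hB
  -- cocycle relation for B
  have hcoc : ∀ τ : K ≃ₐ[ℚ] K, (ψ τ).val * B.map ⇑τ = B := by
    intro τ
    have hmap : B.map ⇑τ
        = ∑ σ : K ≃ₐ[ℚ] K, ((ψ σ).val * M0.map ⇑σ).map ⇑τ := by
      ext i j
      simp only [B, Matrix.map_apply, Matrix.sum_apply, map_sum]
    rw [hmap, Finset.mul_sum]
    have hterm : ∀ σ : K ≃ₐ[ℚ] K,
        (ψ τ).val * ((ψ σ).val * M0.map ⇑σ).map ⇑τ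
          = (ψ (τ * σ)).val * M0.map ⇑(τ * σ) := by
      intro σ
      have h1 : ((ψ σ).val * M0.map ⇑σ).map ⇑τ
          = (ψ σ).val.map ⇑τ * (M0.map ⇑σ).map ⇑τ :=
        Matrix.map_mul (f := (τ : K →+* K))
      have h2 : (⇑τ ∘ ⇑σ) = ⇑(τ * σ) := by
        funext x; simp [AlgEquiv.mul_apply]
      rw [h1, Matrix.map_map, h2, ← mul_assoc, ← hψ τ σ]
    rw [Finset.sum_congr rfl fun σ _ => hterm σ]
    exact Fintype.sum_equiv (Equiv.mulLeft τ) _ _ (fun σ => rfl)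
  -- finish
  refine ⟨(unitOfInvertible B)⁻¹, fun σ => ?_⟩
  have hA1 : (((unitOfInvertible B)⁻¹)⁻¹ :
      Matrix.GeneralLinearGroup (Fin n) K).val = B := by
    rw [inv_inv]; rfl
  have hA2 : ((unitOfInvertible B)⁻¹ :
      Matrix.GeneralLinearGroup (Fin n) K).val = ⅟B := rfl
  rw [hA1, hA2]
  have hone : B.map ⇑σ * (⅟B).map ⇑σ = 1 := by
    have h1 : (B * ⅟B).map ⇑σ = B.map ⇑σ * (⅟B).map ⇑σ :=
      Matrix.map_mul (f := (σ : K →+* K))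
    rw [← h1, mul_invOf_self]
    exact Matrix.map_one _ (map_zero σ) (map_one σ)
  calc (ψ σ).val = (ψ σ).val * (B.map ⇑σ * (⅟B).map ⇑σ) := by rw [hone, mul_one]
    _ = ((ψ σ).val * B.map ⇑σ) * (⅟B).map ⇑σ := by rw [mul_assoc]
    _ = B * (⅟B).map ⇑σ := by rw [hcoc σ]
end

section
/- Let d and e be squarefree integers with d ≡ 1 (mod 4) and e ≡ 1 (mod 4). If rational numbers x, y, z satisfy d·x² + y² + e·z² = 0, then x = y = z = 0. In other words, the conic d·X² + Y² + e·Z² = 0 in ℙ²_ℚ has no rational points. -/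
private lemma stmt13_evens (d e a b c : ℤ) (hd4 : d % 4 = 1) (he4 : e % 4 = 1)
    (h : d * a ^ 2 + b ^ 2 + e * c ^ 2 = 0) : 2 ∣ a ∧ 2 ∣ b ∧ 2 ∣ c := by
  have hd' : (d : ZMod 4) = 1 := by
    obtain ⟨k, hk⟩ : ∃ k, d = 4 * k + 1 := ⟨d / 4, by omega⟩
    rw [hk]; push_cast; rw [show ((4 : ZMod 4)) = 0 by decide]; ring
  have he' : (e : ZMod 4) = 1 := by
    obtain ⟨k, hk⟩ : ∃ k, e = 4 * k + 1 := ⟨e / 4, by omega⟩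
    rw [hk]; push_cast; rw [show ((4 : ZMod 4)) = 0 by decide]; ring
  have h4 : ((a : ZMod 4)) ^ 2 + (b : ZMod 4) ^ 2 + (c : ZMod 4) ^ 2 = 0 := by
    have := congrArg (Int.cast : ℤ → ZMod 4) h
    push_cast at this
    rw [hd', he'] at this
    linear_combination this
  have key : ∀ u v w : ZMod 4, u ^ 2 + v ^ 2 + w ^ 2 = 0 →
      (ZMod.castHom (by norm_num : (2 : ℕ) ∣ 4) (ZMod 2)) u = 0 ∧
      (ZMod.castHom (by norm_num : (2 : ℕ) ∣ 4) (ZMod 2)) v = 0 ∧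
      (ZMod.castHom (by norm_num : (2 : ℕ) ∣ 4) (ZMod 2)) w = 0 := by decide
  obtain ⟨h1, h2, h3⟩ := key _ _ _ h4
  rw [map_intCast] at h1 h2 h3
  exact ⟨(ZMod.intCast_zmod_eq_zero_iff_dvd a 2).mp h1,
    (ZMod.intCast_zmod_eq_zero_iff_dvd b 2).mp h2,
    (ZMod.intCast_zmod_eq_zero_iff_dvd c 2).mp h3⟩

private lemma stmt13_int (d e : ℤ) (hd4 : d % 4 = 1) (he4 : e % 4 = 1) :
    ∀ n : ℕ, ∀ a b c : ℤ, a.natAbs + b.natAbs + c.natAbs ≤ n →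
      d * a ^ 2 + b ^ 2 + e * c ^ 2 = 0 → a = 0 ∧ b = 0 ∧ c = 0 := by
  intro n
  induction n with
  | zero => intro a b c hle h; omega
  | succ n ih =>
    intro a b c hle h
    obtain ⟨⟨a', ha⟩, ⟨b', hb⟩, ⟨c', hc⟩⟩ := stmt13_evens d e a b c hd4 he4 h
    subst ha hb hc
    have h4 : 4 * (d * a' ^ 2 + b' ^ 2 + e * c' ^ 2) = 0 := by linear_combination h
    have h' : d * a' ^ 2 + b' ^ 2 + e * c' ^ 2 = 0 :=
      (mul_eq_zero.mp h4).resolve_left (by norm_num)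
    have hle' : a'.natAbs + b'.natAbs + c'.natAbs ≤ n := by
      rw [Int.natAbs_mul, Int.natAbs_mul, Int.natAbs_mul] at hle
      norm_num at hle
      omega
    obtain ⟨h1, h2, h3⟩ := ih a' b' c' hle' h'
    refine ⟨?_, ?_, ?_⟩ <;> omega

/-- For squarefree integers `d ≡ 1 (mod 4)` and `e ≡ 1 (mod 4)`, the
conic `d X² + Y² + e Z² = 0` has no nontrivial rational points. -/
theorem stmt13 (d e : ℤ) (hd : Squarefree d) (he : Squarefree e)
    (hd4 : d % 4 = 1) (he4 : e % 4 = 1) (x y z : ℚ)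
    (h : (d : ℚ) * x ^ 2 + y ^ 2 + (e : ℚ) * z ^ 2 = 0) :
    x = 0 ∧ y = 0 ∧ z = 0 := by
  have hxd : ((x.den : ℚ)) ≠ 0 := by exact_mod_cast x.den_nz
  have hyd : ((y.den : ℚ)) ≠ 0 := by exact_mod_cast y.den_nz
  have hzd : ((z.den : ℚ)) ≠ 0 := by exact_mod_cast z.den_nz
  have hx : (x.num : ℚ) = x * x.den := by
    exact (div_eq_iff hxd).mp (Rat.num_div_den x)
  have hy : (y.num : ℚ) = y * y.den := by
    exact (div_eq_iff hyd).mp (Rat.num_div_den y)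
  have hz : (z.num : ℚ) = z * z.den := by
    exact (div_eq_iff hzd).mp (Rat.num_div_den z)
  set A : ℤ := x.num * (y.den * z.den) with hA_def
  set B : ℤ := y.num * (x.den * z.den) with hB_def
  set C : ℤ := z.num * (x.den * y.den) with hC_def
  have hA : (A : ℚ) = x * (x.den * y.den * z.den) := by push_cast [hA_def]; rw [hx]; ring
  have hB : (B : ℚ) = y * (x.den * y.den * z.den) := by push_cast [hB_def]; rw [hy]; ring
  have hC : (C : ℚ) = z * (x.den * y.den * z.den) := by push_cast [hC_def]; rw [hz]; ring
  have hint : (d : ℚ) * (A : ℚ) ^ 2 + (B : ℚ) ^ 2 + (e : ℚ) * (C : ℚ) ^ 2 = 0 := by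
    rw [hA, hB, hC]
    linear_combination ((x.den : ℚ) * y.den * z.den) ^ 2 * h
  have hZ : d * A ^ 2 + B ^ 2 + e * C ^ 2 = 0 := by exact_mod_cast hint
  obtain ⟨h1, h2, h3⟩ := stmt13_int d e hd4 he4 (A.natAbs + B.natAbs + C.natAbs) A B C le_rfl hZ
  refine ⟨?_, ?_, ?_⟩
  · have : x.num = 0 := by
      have := h1
      rw [hA_def] at this
      rcases mul_eq_zero.mp this with h | h
      · exact h
      · exact absurd h (by positivity)
    exact Rat.num_eq_zero.mp this
  · have : y.num = 0 := by
      have := h2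
      rw [hB_def] at this
      rcases mul_eq_zero.mp this with h | h
      · exact h
      · exact absurd h (by positivity)
    exact Rat.num_eq_zero.mp this
  · have : z.num = 0 := by
      have := h3
      rw [hC_def] at this
      rcases mul_eq_zero.mp this with h | h
      · exact h
      · exact absurd h (by positivity)
    exact Rat.num_eq_zero.mp this
end

section
/- Let N and M be positive integers such that N divides M, every prime dividing M also divides N, and either N is odd or 4 divides N. Then the kernel of the natural reduction homomorphism (ℤ/Mℤ)ˣ → (ℤ/Nℤ)ˣ on unit groups is a cyclic group. -/
/-- Totient of `N * K` when all primes of `K` divide `N`. -/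
private lemma stmt15_tot : ∀ K N : ℕ, 0 < N →
    (∀ p : ℕ, p.Prime → p ∣ K → p ∣ N) → (N * K).totient = K * N.totient := by
  intro K
  induction K using Nat.strong_induction_on with
  | _ K ih =>
    intro N hN hp
    rcases eq_or_ne K 1 with rfl | hK1
    · simp
    rcases eq_or_ne K 0 with rfl | hK0
    · simp
    obtain ⟨p, pp, pdvd⟩ := Nat.exists_prime_and_dvd hK1
    obtain ⟨K', rfl⟩ := pdvd
    have hK' : K' ≠ 0 := by rintro rfl; simp at hK0
    have hlt : K' < p * K' := by
      have h2 := pp.two_le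
      have h0 := Nat.pos_of_ne_zero hK'
      nlinarith
    have hdvdN : p ∣ N := hp p pp ⟨K', rfl⟩
    have h1 : N * (p * K') = p * (N * K') := by ring
    rw [h1, Nat.totient_mul_of_prime_of_dvd pp (hdvdN.mul_right K'),
      ih K' hlt N hN (fun q hq hq' => hp q hq (hq'.mul_left p))]
    ring

/-- Lifting-the-exponent for `(1+N)^k - 1`. -/
private lemma stmt15_lte {N p k : ℕ} (hN : 0 < N) (pp : p.Prime) (hpN : p ∣ N)
    (hN4 : Odd N ∨ 4 ∣ N) (hk : k ≠ 0) :
    padicValNat p ((1 + N) ^ k - 1) = padicValNat p N + padicValNat p k := by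
  haveI : Fact p.Prime := ⟨pp⟩
  have hx : ¬ p ∣ 1 + N := by
    intro h
    have : p ∣ 1 := (Nat.dvd_add_right hpN).mp (by rwa [add_comm] at h)
    exact pp.one_lt.ne' (Nat.dvd_one.mp this)
  have hsub : 1 + N - 1 = N := by omega
  rcases eq_or_ne p 2 with rfl | hp2
  · -- p = 2; then N is even, so 4 ∣ N
    have h4 : 4 ∣ N := by
      rcases hN4 with hodd | h4
      · exact absurd ((even_iff_two_dvd).mpr hpN) (Nat.not_even_iff_odd.mpr hodd)
      · exact h4
    -- work with emultiplicity over ℤ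
    have hpos1 : 0 < (1 + N) ^ k - 1 := by
      have : 1 + N ≤ (1 + N) ^ k := Nat.le_self_pow hk _
      omega
    rw [← Nat.cast_inj (R := ℕ∞), Nat.cast_add]
    rw [padicValNat_eq_emultiplicity hpos1.ne', padicValNat_eq_emultiplicity hN.ne',
      padicValNat_eq_emultiplicity hk]
    have hx' : ¬ (2:ℤ) ∣ ((1:ℤ) + N) := by exact_mod_cast hx
    have h4' : (4:ℤ) ∣ ((1:ℤ) + N) - 1 := by
      have : ((1:ℤ) + N) - 1 = (N : ℤ) := by ring
      rw [this]; exact_mod_cast h4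
    have := Int.two_pow_sub_pow' k h4' hx'
    rw [one_pow] at this
    calc emultiplicity 2 ((1 + N) ^ k - 1)
        = emultiplicity (2:ℤ) (((1 + N) ^ k - 1 : ℕ) : ℤ) :=
          (Int.natCast_emultiplicity 2 _).symm
      _ = emultiplicity (2:ℤ) (((1:ℤ) + N) ^ k - 1) := by
          congr 1
          have : 1 ≤ (1 + N) ^ k := Nat.one_le_iff_ne_zero.mpr (by positivity)
          push_cast [this]
          ring
      _ = emultiplicity (2:ℤ) (((1:ℤ) + N) - 1) + emultiplicity (2:ℤ) (k:ℤ) := this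
      _ = emultiplicity (2:ℤ) ((N:ℕ):ℤ) + emultiplicity (2:ℤ) ((k:ℕ):ℤ) := by
          rw [show ((1:ℤ) + N) - 1 = ((N:ℕ):ℤ) by ring]
      _ = emultiplicity 2 N + emultiplicity 2 k := by
          congr 1
          · exact Int.natCast_emultiplicity 2 N
          · exact Int.natCast_emultiplicity 2 k
  · -- odd p
    have hodd : Odd p := pp.odd_of_ne_two hp2
    have := padicValNat.pow_sub_pow (p := p) (x := 1 + N) (y := 1) hodd
      (by omega) (by rwa [hsub]) hx hk
    rwa [one_pow, hsub] at this

/-- Key divisibility equivalence. -/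
private lemma stmt15_dvd {N K k : ℕ} (hN : 0 < N) (hK : 0 < K) (hk : 0 < k)
    (hp : ∀ p : ℕ, p.Prime → p ∣ K → p ∣ N) (hN4 : Odd N ∨ 4 ∣ N) :
    N * K ∣ (1 + N) ^ k - 1 ↔ K ∣ k := by
  have hApos : 0 < (1 + N) ^ k - 1 := by
    have : 1 + N ≤ (1 + N) ^ k := Nat.le_self_pow hk.ne' _
    omega
  rw [← Nat.factorization_le_iff_dvd (by positivity) hApos.ne',
    ← Nat.factorization_le_iff_dvd hK.ne' hk.ne', Finsupp.le_def, Finsupp.le_def]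
  have key : ∀ q : ℕ, ((N * K).factorization q ≤ ((1 + N) ^ k - 1).factorization q
      ↔ K.factorization q ≤ k.factorization q) := by
    intro q
    by_cases hq : q.Prime
    · by_cases hqN : q ∣ N
      · rw [Nat.factorization_mul hN.ne' hK.ne']
        rw [Finsupp.add_apply]
        rw [Nat.factorization_def _ hq, Nat.factorization_def _ hq,
          Nat.factorization_def _ hq, Nat.factorization_def _ hq,
          stmt15_lte hN hq hqN hN4 hk.ne']
        omega
      · have hqK : ¬ q ∣ K := fun h => hqN (hp q hq h)
        have h1 : (N * K).factorization q = 0 := by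
          rw [Nat.factorization_eq_zero_iff]
          right; left
          rw [Nat.Prime.dvd_mul hq]
          tauto
        have h2 : K.factorization q = 0 := by
          rw [Nat.factorization_eq_zero_iff]; tauto
        simp [h1, h2]
    · simp [Nat.factorization_eq_zero_of_not_prime _ hq]
  exact ⟨fun h q => (key q).mp (h q), fun h q => (key q).mpr (h q)⟩

/-- Let `N ∣ M` be positive integers such that every prime dividing
`M` divides `N`, and `N` is odd or divisible by `4`.  Then the kernel of the reduction
map `(ℤ/Mℤ)ˣ → (ℤ/Nℤ)ˣ` is cyclic. -/
theorem stmt15 (N M : ℕ) (hN : 0 < N) (hM : 0 < M) (hdvd : N ∣ M)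
    (hprimes : ∀ p : ℕ, p.Prime → p ∣ M → p ∣ N)
    (hN4 : Odd N ∨ 4 ∣ N) :
    IsCyclic (MonoidHom.ker (Units.map (ZMod.castHom hdvd (ZMod N)).toMonoidHom)) := by
  obtain ⟨K, rfl⟩ := hdvd
  have hK : 0 < K := Nat.pos_of_mul_pos_left (by rwa [mul_comm] at hM)
  haveI : NeZero N := ⟨hN.ne'⟩
  haveI : NeZero (N * K) := ⟨hM.ne'⟩
  have hpK : ∀ p : ℕ, p.Prime → p ∣ K → p ∣ N :=
    fun p pp h => hprimes p pp (h.mul_left N)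
  set f := Units.map (ZMod.castHom (⟨K, rfl⟩ : N ∣ N * K) (ZMod N)).toMonoidHom with hf
  -- cardinality of the kernel is K
  have hsurj : Function.Surjective f := ZMod.unitsMap_surjective ⟨K, rfl⟩
  have hcard : Nat.card (MonoidHom.ker f) = K := by
    have h1 : Nat.card (ZMod (N * K))ˣ =
        Nat.card ((ZMod (N * K))ˣ ⧸ MonoidHom.ker f) * Nat.card (MonoidHom.ker f) :=
      Subgroup.card_eq_card_quotient_mul_card_subgroup _
    have h2 : Nat.card ((ZMod (N * K))ˣ ⧸ MonoidHom.ker f) = Nat.card (ZMod N)ˣ := by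
      rw [Nat.card_congr (QuotientGroup.quotientKerEquivOfSurjective f hsurj).toEquiv]
    have h3 : Nat.card (ZMod (N * K))ˣ = (N * K).totient := by
      rw [Nat.card_eq_fintype_card, ZMod.card_units_eq_totient]
    have h4 : Nat.card (ZMod N)ˣ = N.totient := by
      rw [Nat.card_eq_fintype_card, ZMod.card_units_eq_totient]
    rw [h3, h2, h4, stmt15_tot K N hN hpK] at h1
    have hNt : 0 < N.totient := Nat.totient_pos.mpr hN
    exact (Nat.eq_of_mul_eq_mul_left hNt (by linarith [h1])).symm
  -- the unit 1 + N
  have hcop : Nat.Coprime (1 + N) (N * K) := by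
    by_contra h
    obtain ⟨p, pp, hp1, hp2⟩ := Nat.Prime.not_coprime_iff_dvd.mp h
    have hpN : p ∣ N := hprimes p pp hp2
    have : p ∣ 1 := by simpa using Nat.dvd_sub hp1 hpN
    exact pp.one_lt.ne' (Nat.dvd_one.mp this)
  set u : (ZMod (N * K))ˣ := ZMod.unitOfCoprime (1 + N) hcop with hu
  have huval : (u : ZMod (N * K)) = ((1 + N : ℕ) : ZMod (N * K)) :=
    ZMod.coe_unitOfCoprime _ _
  have humem : u ∈ MonoidHom.ker f := by
    rw [MonoidHom.mem_ker]
    ext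
    show (ZMod.castHom _ (ZMod N)) (u : ZMod (N * K)) = 1
    rw [huval, ZMod.castHom_apply, ZMod.cast_natCast (⟨K, rfl⟩ : N ∣ N * K)]
    push_cast
    simp [ZMod.natCast_self]
  -- powers of u
  have hpow : ∀ m : ℕ, 0 < m → (u ^ m = 1 ↔ K ∣ m) := by
    intro m hm
    rw [← stmt15_dvd hN hK hm hpK hN4]
    have h1m : 1 ≤ (1 + N) ^ m := Nat.one_le_iff_ne_zero.mpr (by positivity)
    rw [Units.ext_iff, Units.val_pow_eq_pow_val, huval, Units.val_one,
      ← Nat.cast_pow, show (1 : ZMod (N * K)) = ((1 : ℕ) : ZMod (N * K)) by simp,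
      ZMod.natCast_eq_natCast_iff]
    constructor
    · intro h
      exact (Nat.modEq_iff_dvd' h1m).mp h.symm
    · intro h
      exact ((Nat.modEq_iff_dvd' h1m).mpr h).symm
  have hord : orderOf u = K := by
    have h1 : u ^ K = 1 := (hpow K hK).mpr dvd_rfl
    have h2 : orderOf u ∣ K := orderOf_dvd_of_pow_eq_one h1
    have h3 : 0 < orderOf u := orderOf_pos u
    have h4 : K ∣ orderOf u := (hpow _ h3).mp (pow_orderOf_eq_one u)
    exact Nat.dvd_antisymm h2 h4
  -- conclude
  apply isCyclic_of_orderOf_eq_card (⟨u, humem⟩ : MonoidHom.ker f)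
  have h5 := orderOf_injective (MonoidHom.ker f).subtype Subtype.coe_injective
    (⟨u, humem⟩ : MonoidHom.ker f)
  rw [hcard, ← h5]
  exact hord
end
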